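/- Let p be a prime, x ∈ ℤ_p, Q > 1 and 0 < δ₀ ≤ 1. Let P ∈ ℤ[X] be a polynomial of degree n ≥ 2 with H(P) ≤ Q such that δ₀ Q^{−θ_i} ≤ |(1/i!) P^{(i)}(x)|_p ≤ Q^{−θ_i} for all 0 ≤ i ≤ n, for some real parameters θ₀, …, θ_n. Let α₁, …, α_n be the roots of P in the algebraic closure of ℚ_p (with multiplicity), ordered so that |x − α₁|_p ≤ ⋯ ≤ |x − α_n|_p, and define d_j := θ_{j−1} − θ_j for 1 ≤ j ≤ n. If d₁ ≥ d₂ ≥ ⋯ ≥ d_n ≥ 0, then |x − α_j|_p ≤ δ₀^{−1} Q^{−d_j} for every 1 ≤ j ≤ n. -/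

import Mathlib

open Polynomial

/-- The height of an integer polynomial: the maximum of the absolute values of its
coefficients. -/
def polyHeight (P : Polynomial ℤ) : ℕ :=
  (Finset.range (P.natDegree + 1)).sup fun i => (P.coeff i).natAbs

private lemma hasseDeriv_map' {R S : Type*} [CommSemiring R] [CommSemiring S] (f : R →+* S)
    (k : ℕ) (P : R[X]) : (Polynomial.hasseDeriv k P).map f = Polynomial.hasseDeriv k (P.map f) := by
  ext m
  simp [Polynomial.hasseDeriv_coeff, Polynomial.coeff_map]

private lemma prod_le_prod_top {ι : Type*} [DecidableEq ι] (w : ι → ℝ) (hw : ∀ i, 0 ≤ w i)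
    (A t : Finset ι) (hcard : t.card = A.card) (b : ℝ) (hb : 0 ≤ b)
    (hA : ∀ i ∈ A, b ≤ w i) (hA' : ∀ i, i ∉ A → w i ≤ b) :
    ∏ i ∈ t, w i ≤ ∏ i ∈ A, w i := by
  have hm : (t \ A).card = (A \ t).card := by
    have h1 := Finset.card_inter_add_card_sdiff t A
    have h2 := Finset.card_inter_add_card_sdiff A t
    rw [Finset.inter_comm] at h2
    omega
  have h0 : (0:ℝ) ≤ ∏ i ∈ t ∩ A, w i := Finset.prod_nonneg fun i _ => hw i
  calc ∏ i ∈ t, w i = (∏ i ∈ t ∩ A, w i) * ∏ i ∈ t \ A, w i :=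
        (Finset.prod_inter_mul_prod_diff t A w).symm
    _ ≤ (∏ i ∈ t ∩ A, w i) * b ^ (t \ A).card := by
        refine mul_le_mul_of_nonneg_left ?_ h0
        calc ∏ i ∈ t \ A, w i ≤ ∏ _i ∈ t \ A, b :=
              Finset.prod_le_prod (fun i _ => hw i)
                (fun i hi => hA' i (Finset.mem_sdiff.mp hi).2)
          _ = b ^ (t \ A).card := Finset.prod_const b
    _ ≤ (∏ i ∈ t ∩ A, w i) * ∏ i ∈ A \ t, w i := by
        refine mul_le_mul_of_nonneg_left ?_ h0
        rw [hm]
        calc b ^ (A \ t).card = ∏ _i ∈ A \ t, b := (Finset.prod_const b).symm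
          _ ≤ ∏ i ∈ A \ t, w i :=
            Finset.prod_le_prod (fun _ _ => hb)
              (fun i hi => hA i (Finset.mem_sdiff.mp hi).1)
    _ = ∏ i ∈ A, w i := by
        rw [Finset.inter_comm]; exact Finset.prod_inter_mul_prod_diff A t w

private lemma prod_lt_prod_top {ι : Type*} [DecidableEq ι] (w : ι → ℝ) (hw : ∀ i, 0 ≤ w i)
    (A t : Finset ι) (hcard : t.card = A.card) (b : ℝ) (hb : 0 < b)
    (hA : ∀ i ∈ A, b ≤ w i) (hA' : ∀ i, i ∉ A → w i < b) (hne : t ≠ A) :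
    ∏ i ∈ t, w i < ∏ i ∈ A, w i := by
  have hApos : 0 < ∏ i ∈ A, w i :=
    Finset.prod_pos fun i hi => lt_of_lt_of_le hb (hA i hi)
  have hm : (t \ A).card = (A \ t).card := by
    have h1 := Finset.card_inter_add_card_sdiff t A
    have h2 := Finset.card_inter_add_card_sdiff A t
    rw [Finset.inter_comm] at h2
    omega
  have hne' : (t \ A).Nonempty := by
    rw [Finset.sdiff_nonempty]
    intro hsub
    exact hne (Finset.eq_of_subset_of_card_le hsub (le_of_eq hcard.symm))
  obtain ⟨i₀, hi₀⟩ := hne'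
  have hstrict : ∏ i ∈ t \ A, w i < b ^ (t \ A).card := by
    rw [← Finset.mul_prod_erase _ _ hi₀]
    have hcard' : ((t \ A).erase i₀).card = (t \ A).card - 1 := Finset.card_erase_of_mem hi₀
    have h1 : ∏ i ∈ (t \ A).erase i₀, w i ≤ b ^ ((t \ A).card - 1) := by
      rw [← hcard']
      calc ∏ i ∈ (t \ A).erase i₀, w i ≤ ∏ _i ∈ (t \ A).erase i₀, b :=
            Finset.prod_le_prod (fun i _ => hw i)
              (fun i hi => le_of_lt (hA' i (Finset.mem_sdiff.mp (Finset.mem_of_mem_erase hi)).2))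
        _ = b ^ ((t \ A).erase i₀).card := Finset.prod_const b
    have hi₀' : w i₀ < b := hA' i₀ (Finset.mem_sdiff.mp hi₀).2
    have hcpos : 1 ≤ (t \ A).card := Finset.card_pos.mpr ⟨i₀, hi₀⟩
    calc w i₀ * ∏ i ∈ (t \ A).erase i₀, w i ≤ w i₀ * b ^ ((t \ A).card - 1) :=
          mul_le_mul_of_nonneg_left h1 (hw i₀)
      _ < b * b ^ ((t \ A).card - 1) :=
          mul_lt_mul_of_pos_right hi₀' (pow_pos hb _)
      _ = b ^ (t \ A).card := by
          rw [← pow_succ']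
          congr 1
          omega
  have h0 : (0:ℝ) ≤ ∏ i ∈ t ∩ A, w i := Finset.prod_nonneg fun i _ => hw i
  rcases h0.eq_or_lt with h0' | h0'
  · have : ∏ i ∈ t, w i = 0 := by
      rw [← Finset.prod_inter_mul_prod_diff t A w, ← h0', zero_mul]
    rw [this]; exact hApos
  · calc ∏ i ∈ t, w i = (∏ i ∈ t ∩ A, w i) * ∏ i ∈ t \ A, w i :=
          (Finset.prod_inter_mul_prod_diff t A w).symm
      _ < (∏ i ∈ t ∩ A, w i) * b ^ (t \ A).card :=
          mul_lt_mul_of_pos_left hstrict h0'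
      _ ≤ (∏ i ∈ t ∩ A, w i) * ∏ i ∈ A \ t, w i := by
          refine mul_le_mul_of_nonneg_left ?_ h0
          rw [hm]
          calc b ^ (A \ t).card = ∏ _i ∈ A \ t, b := (Finset.prod_const b).symm
            _ ≤ ∏ i ∈ A \ t, w i :=
              Finset.prod_le_prod (fun _ _ => hb.le)
                (fun i hi => hA i (Finset.mem_sdiff.mp hi).1)
      _ = ∏ i ∈ A, w i := by
          rw [Finset.inter_comm]; exact Finset.prod_inter_mul_prod_diff A t w

private lemma norm_add_eq_left' {M : Type*} [SeminormedAddCommGroup M] [IsUltrametricDist M]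
    (u v : M) (h : ‖v‖ < ‖u‖) : ‖u + v‖ = ‖u‖ := by
  refine le_antisymm ((IsUltrametricDist.norm_add_le_max u v).trans (max_le le_rfl h.le)) ?_
  have h2 := IsUltrametricDist.norm_add_le_max (u + v) (-v)
  simp only [add_neg_cancel_right, norm_neg] at h2
  rcases max_cases ‖u + v‖ ‖v‖ with ⟨he, _⟩ | ⟨he, _⟩
  · rw [he] at h2; exact h2
  · rw [he] at h2; exact absurd (lt_of_le_of_lt h2 h) (lt_irrefl _)

private lemma valueId (p : ℕ) [Fact p.Prime] (L : Type*) [CommRing L] [Algebra ℚ_[p] L]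
    (x : ℤ_[p]) (n : ℕ) (P : Polynomial ℤ) (α : Fin n → L)
    (hfact : P.map (algebraMap ℤ L) =
      Polynomial.C (algebraMap ℤ L P.leadingCoeff) *
        ∏ i : Fin n, (Polynomial.X - Polynomial.C (α i)))
    (k : ℕ) (hk : k ≤ n) :
    algebraMap ℚ_[p] L ((Polynomial.aeval x (Polynomial.hasseDeriv k P) : ℤ_[p]) : ℚ_[p]) =
      algebraMap ℤ L P.leadingCoeff *
        ∑ t ∈ Finset.powersetCard (n - k) (Finset.univ : Finset (Fin n)),
          ∏ i ∈ t, (algebraMap ℚ_[p] L (x : ℚ_[p]) - α i) := by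
  set g : ℤ_[p] →+* L := (algebraMap ℚ_[p] L).comp (PadicInt.Coe.ringHom) with hgdef
  show g (Polynomial.aeval x (Polynomial.hasseDeriv k P)) = _
  have step1 : g (Polynomial.aeval x (Polynomial.hasseDeriv k P)) =
      Polynomial.eval₂ (algebraMap ℤ L) (g x) (Polynomial.hasseDeriv k P) := by
    rw [Polynomial.aeval_def, Polynomial.hom_eval₂]
    congr 1
    exact Subsingleton.elim _ _
  rw [step1, Polynomial.eval₂_eq_eval_map, hasseDeriv_map', ← Polynomial.taylor_coeff,
    hfact, Polynomial.taylor_apply, Polynomial.mul_comp, Polynomial.C_comp,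
    Polynomial.prod_comp]
  simp only [Polynomial.sub_comp, Polynomial.X_comp, Polynomial.C_comp]
  have heq : ∀ i : Fin n, Polynomial.X + Polynomial.C (g x) - Polynomial.C (α i)
      = Polynomial.X + Polynomial.C (g x - α i) := by
    intro i; rw [map_sub]; ring
  rw [Finset.prod_congr rfl fun i _ => heq i, Polynomial.coeff_C_mul,
    Finset.prod_X_add_C_coeff _ _ (by simpa using hk)]
  have hcard : (Finset.univ : Finset (Fin n)).card = n := by simp
  rw [hcard]
  rfl

/-- Let `p` be a prime, `x ∈ ℤ_p`, `Q > 1` and `0 < δ₀ ≤ 1`. Let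
`P ∈ ℤ[X]` of degree `n ≥ 2` with `H(P) ≤ Q` satisfy
`δ₀ Q^{−θ_i} ≤ |(1/i!) P⁽ⁱ⁾(x)|_p ≤ Q^{−θ_i}` for all `0 ≤ i ≤ n`. Let `α₁, …, α_n` be the
roots of `P` (with multiplicity) in the algebraic closure of `ℚ_p`, ordered so that
`|x − α₁|_p ≤ ⋯ ≤ |x − α_n|_p`, and set `d_j := θ_{j−1} − θ_j`. If `d₁ ≥ ⋯ ≥ d_n ≥ 0`,
then `|x − α_j|_p ≤ δ₀⁻¹ Q^{−d_j}` for all `1 ≤ j ≤ n`.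

The algebraic closure of `ℚ_p` together with its (unique) extension of the `p`-adic absolute
value is modelled by an algebraically closed normed field `L`, algebraic over `ℚ_p`, whose
norm restricts to the `p`-adic norm on `ℚ_p`. -/
theorem stmt14 (p : ℕ) [Fact p.Prime]
    (L : Type*) [NormedField L] [Algebra ℚ_[p] L] [IsAlgClosed L]
    [Algebra.IsAlgebraic ℚ_[p] L]
    (hL : ∀ y : ℚ_[p], ‖algebraMap ℚ_[p] L y‖ = ‖y‖)
    (x : ℤ_[p]) (Q δ₀ : ℝ) (hQ : 1 < Q) (hδ₀0 : 0 < δ₀) (hδ₀1 : δ₀ ≤ 1)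
    (n : ℕ) (hn : 2 ≤ n) (P : Polynomial ℤ) (hdeg : P.natDegree = n)
    (hH : (polyHeight P : ℝ) ≤ Q)
    (θ : ℕ → ℝ)
    (hbounds : ∀ i ≤ n,
      δ₀ * Q ^ (-(θ i)) ≤ ‖Polynomial.aeval x (Polynomial.hasseDeriv i P)‖ ∧
      ‖Polynomial.aeval x (Polynomial.hasseDeriv i P)‖ ≤ Q ^ (-(θ i)))
    (α : Fin n → L)
    (hfact : P.map (algebraMap ℤ L) =
      Polynomial.C (algebraMap ℤ L P.leadingCoeff) *
        ∏ i : Fin n, (Polynomial.X - Polynomial.C (α i)))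
    (hord : ∀ i j : Fin n, i ≤ j →
      ‖algebraMap ℚ_[p] L (x : ℚ_[p]) - α i‖ ≤ ‖algebraMap ℚ_[p] L (x : ℚ_[p]) - α j‖)
    (d : ℕ → ℝ) (hd : ∀ j, 1 ≤ j → j ≤ n → d j = θ (j - 1) - θ j)
    (hdmono : ∀ j, 1 ≤ j → j < n → d (j + 1) ≤ d j) (hdnn : 0 ≤ d n) :
    ∀ j : ℕ, 1 ≤ j → ∀ hj : j ≤ n,
      ‖algebraMap ℚ_[p] L (x : ℚ_[p]) - α ⟨j - 1, by omega⟩‖ ≤ δ₀⁻¹ * Q ^ (-(d j)) := by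
  intro j hj1 hjn
  have hQ0 : (0:ℝ) < Q := lt_trans one_pos hQ
  have hRpos : (0:ℝ) < δ₀⁻¹ * Q ^ (-(d j)) := by positivity
  -- ultrametricity of L
  haveI : IsUltrametricDist L := by
    apply IsUltrametricDist.isUltrametricDist_of_forall_norm_natCast_le_one
    intro m
    have h1 : ((m : ℕ) : L) = algebraMap ℚ_[p] L ((m : ℕ) : ℚ_[p]) := by
      rw [map_natCast]
    rw [h1, hL]
    have := Padic.norm_int_le_one (p := p) (m : ℤ)
    push_cast at this
    exact this
  set y : L := algebraMap ℚ_[p] L (x : ℚ_[p]) with hy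
  set β : Fin n → L := fun i => y - α i with hβ
  set j' : Fin n := ⟨j - 1, by omega⟩ with hj'def
  have hmono : ∀ i k : Fin n, i ≤ k → ‖β i‖ ≤ ‖β k‖ := fun i k h => hord i k h
  show ‖β j'‖ ≤ δ₀⁻¹ * Q ^ (-(d j))
  rcases (norm_nonneg (β j')).eq_or_lt with hb0 | hb
  · rw [← hb0]; exact hRpos.le
  set b := ‖β j'‖ with hbdef
  classical
  set S : Finset (Fin n) := Finset.univ.filter (fun i => ‖β i‖ < b) with hSdef
  set a := S.card with hadef
  have hSm : ∀ i, i ∈ S ↔ ‖β i‖ < b := by intro i; simp [hSdef]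
  have hScA : ∀ i ∈ Sᶜ, b ≤ ‖β i‖ := by
    intro i hi
    rw [Finset.mem_compl] at hi
    exact not_lt.mp (fun h => hi ((hSm i).mpr h))
  have hScA' : ∀ i, i ∉ Sᶜ → ‖β i‖ < b := by
    intro i hi
    rw [Finset.mem_compl, not_not] at hi
    exact (hSm i).mp hi
  have haj : a ≤ j - 1 := by
    have hsub : S ⊆ (Finset.Ici j')ᶜ := by
      intro i hi
      rw [Finset.mem_compl, Finset.mem_Ici]
      intro hle
      exact absurd (hmono j' i hle) (not_le.mpr ((hSm i).mp hi))
    have hc := Finset.card_le_card hsub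
    rw [Finset.card_compl, Fin.card_Ici] at hc
    simp only [Fintype.card_fin] at hc
    have hjv : (j' : ℕ) = j - 1 := rfl
    omega
  have hSccard : Sᶜ.card = n - a := by
    rw [Finset.card_compl]
    simp [hadef]
  set t₁ : Finset (Fin n) := Finset.Ioi j' with ht₁def
  have ht₁c : t₁.card = n - j := by
    rw [ht₁def, Fin.card_Ioi]
    have hjv : (j' : ℕ) = j - 1 := rfl
    rw [hjv]
    omega
  have ht₁A : ∀ i ∈ t₁, b ≤ ‖β i‖ := fun i hi =>
    hmono j' i (le_of_lt (Finset.mem_Ioi.mp hi))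
  have ht₁A' : ∀ i, i ∉ t₁ → ‖β i‖ ≤ b := by
    intro i hi
    rw [ht₁def, Finset.mem_Ioi, not_lt] at hi
    exact hmono i j' hi
  have hsub₁ : t₁ ⊆ Sᶜ := by
    intro i hi
    rw [Finset.mem_compl]
    intro hiS
    exact absurd ((hSm i).mp hiS) (not_lt.mpr (ht₁A i hi))
  -- norm identity
  have hnorm : ∀ k : ℕ, ‖Polynomial.aeval x (Polynomial.hasseDeriv k P)‖ =
      ‖algebraMap ℚ_[p] L ((Polynomial.aeval x (Polynomial.hasseDeriv k P) : ℤ_[p]) : ℚ_[p])‖ := by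
    intro k
    rw [hL]
    rfl
  -- equality at level a
  have hEq_a : ‖Polynomial.aeval x (Polynomial.hasseDeriv a P)‖ =
      ‖algebraMap ℤ L P.leadingCoeff‖ * ∏ i ∈ Sᶜ, ‖β i‖ := by
    rw [hnorm, valueId p L x n P α hfact a (by omega), norm_mul]
    congr 1
    have hmem : Sᶜ ∈ Finset.powersetCard (n - a) (Finset.univ : Finset (Fin n)) := by
      rw [Finset.mem_powersetCard]
      exact ⟨Finset.subset_univ _, hSccard⟩
    rw [← Finset.add_sum_erase _ _ hmem]
    have hT0 : ‖∏ i ∈ Sᶜ, β i‖ = ∏ i ∈ Sᶜ, ‖β i‖ := norm_prod _ _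
    have hT0pos : 0 < ∏ i ∈ Sᶜ, ‖β i‖ :=
      Finset.prod_pos fun i hi => lt_of_lt_of_le hb (hScA i hi)
    have hrest : ‖∑ t ∈ (Finset.powersetCard (n - a) (Finset.univ : Finset (Fin n))).erase Sᶜ,
        ∏ i ∈ t, β i‖ < ‖∏ i ∈ Sᶜ, β i‖ := by
      rw [hT0]
      rcases ((Finset.powersetCard (n - a) (Finset.univ : Finset (Fin n))).erase
          Sᶜ).eq_empty_or_nonempty with he | hne
      · rw [he, Finset.sum_empty, norm_zero]; exact hT0pos
      · obtain ⟨t, ht, hle⟩ :=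
          IsUltrametricDist.exists_norm_finset_sum_le_of_nonempty hne (fun t => ∏ i ∈ t, β i)
        refine lt_of_le_of_lt hle ?_
        rw [norm_prod]
        obtain ⟨htne, htmem⟩ := Finset.mem_erase.mp ht
        rw [Finset.mem_powersetCard] at htmem
        exact prod_lt_prod_top (fun i => ‖β i‖) (fun i => norm_nonneg _) Sᶜ t
          (htmem.2.trans hSccard.symm) b hb hScA hScA' htne
    rw [norm_add_eq_left' _ _ hrest, hT0]
  -- upper bound at level j
  have hLe_j : ‖Polynomial.aeval x (Polynomial.hasseDeriv j P)‖ ≤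
      ‖algebraMap ℤ L P.leadingCoeff‖ * ∏ i ∈ t₁, ‖β i‖ := by
    rw [hnorm, valueId p L x n P α hfact j hjn, norm_mul]
    refine mul_le_mul_of_nonneg_left ?_ (norm_nonneg _)
    refine IsUltrametricDist.norm_sum_le_of_forall_le_of_nonneg
      (Finset.prod_nonneg fun i _ => norm_nonneg _) ?_
    intro t ht
    rw [norm_prod]
    rw [Finset.mem_powersetCard] at ht
    exact prod_le_prod_top (fun i => ‖β i‖) (fun i => norm_nonneg _) t₁ t
      (ht.2.trans ht₁c.symm) b hb.le ht₁A ht₁A'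
  -- splitting the product over Sᶜ
  have hmid : ∀ i ∈ Sᶜ \ t₁, ‖β i‖ = b := fun i hi =>
    le_antisymm (ht₁A' i (Finset.mem_sdiff.mp hi).2) (hScA i (Finset.mem_sdiff.mp hi).1)
  have hmidcard : (Sᶜ \ t₁).card = j - a := by
    rw [Finset.card_sdiff_of_subset hsub₁, hSccard, ht₁c]
    omega
  have hsplit : ∏ i ∈ Sᶜ, ‖β i‖ = b ^ (j - a) * ∏ i ∈ t₁, ‖β i‖ := by
    rw [← Finset.prod_sdiff hsub₁]
    congr 1
    rw [Finset.prod_congr rfl hmid, Finset.prod_const, hmidcard]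
  -- key inequality
  have hbd := (hbounds j hjn).1
  have hba := (hbounds a (by omega)).2
  have key : b ^ (j - a) * (δ₀ * Q ^ (-(θ j))) ≤ Q ^ (-(θ a)) := by
    calc b ^ (j - a) * (δ₀ * Q ^ (-(θ j)))
        ≤ b ^ (j - a) * (‖algebraMap ℤ L P.leadingCoeff‖ * ∏ i ∈ t₁, ‖β i‖) :=
          mul_le_mul_of_nonneg_left (hbd.trans hLe_j) (pow_nonneg hb.le _)
      _ = ‖algebraMap ℤ L P.leadingCoeff‖ * ∏ i ∈ Sᶜ, ‖β i‖ := by rw [hsplit]; ring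
      _ = ‖Polynomial.aeval x (Polynomial.hasseDeriv a P)‖ := hEq_a.symm
      _ ≤ Q ^ (-(θ a)) := hba
  -- telescoping sum of the d's
  have hdj_le : ∀ k, 1 ≤ k → k ≤ j → d j ≤ d k := by
    intro k hk1 hkj
    have hstep : ∀ m : ℕ, k + m ≤ n → d (k + m) ≤ d k := by
      intro m
      induction m with
      | zero => intro _; simp
      | succ i ih =>
        intro h
        have h1 := hdmono (k + i) (by omega) (by omega)
        have h2 := ih (by omega)
        calc d (k + (i + 1)) = d ((k + i) + 1) := by ring_nf
          _ ≤ d (k + i) := h1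
          _ ≤ d k := h2
    have := hstep (j - k) (by omega)
    rwa [Nat.add_sub_cancel' hkj] at this
  have htel : ((j - a : ℕ) : ℝ) * d j ≤ θ a - θ j := by
    have hgen : ∀ m : ℕ, a ≤ m → m ≤ j → ((m - a : ℕ) : ℝ) * d j ≤ θ a - θ m := by
      intro m ham
      induction m, ham using Nat.le_induction with
      | base => intro _; simp
      | succ m ham ih =>
        intro hmj
        have hdm : d (m + 1) = θ m - θ (m + 1) := by
          have := hd (m + 1) (by omega) (by omega)
          simpa using this
        have hdge : d j ≤ d (m + 1) := hdj_le (m + 1) (by omega) hmj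
        have ihm := ih (by omega)
        have hcast : ((m + 1 - a : ℕ) : ℝ) = ((m - a : ℕ) : ℝ) + 1 := by
          have : m + 1 - a = (m - a) + 1 := by omega
          rw [this]
          push_cast
          ring
        rw [hcast]
        nlinarith [ihm, hdge, hdm]
    exact hgen j (by omega) le_rfl
  -- final computation
  have hm1 : 1 ≤ j - a := by omega
  have hQd : (0:ℝ) < Q ^ (-(d j)) := Real.rpow_pos_of_pos hQ0 _
  have h1 : b ^ (j - a) ≤ δ₀⁻¹ * Q ^ (θ j - θ a) := by
    have hpos : (0:ℝ) < δ₀ * Q ^ (-(θ j)) := by positivity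
    rw [← le_div_iff₀ hpos] at key
    calc b ^ (j - a) ≤ Q ^ (-(θ a)) / (δ₀ * Q ^ (-(θ j))) := key
      _ = δ₀⁻¹ * Q ^ (θ j - θ a) := by
          rw [Real.rpow_sub hQ0, Real.rpow_neg hQ0.le, Real.rpow_neg hQ0.le]
          field_simp
  have h2 : Q ^ (θ j - θ a) ≤ Q ^ (-(((j - a : ℕ) : ℝ) * d j)) :=
    Real.rpow_le_rpow_of_exponent_le hQ.le (by linarith)
  have h3 : Q ^ (-(((j - a : ℕ) : ℝ) * d j)) = (Q ^ (-(d j))) ^ (j - a) := by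
    rw [show -(((j - a : ℕ) : ℝ) * d j) = (-(d j)) * ((j - a : ℕ) : ℝ) by ring,
      Real.rpow_mul hQ0.le, Real.rpow_natCast]
  have h4 : δ₀⁻¹ ≤ (δ₀⁻¹) ^ (j - a) := by
    refine le_self_pow₀ ?_ (by omega)
    have := inv_anti₀ hδ₀0 hδ₀1
    simpa using this
  have hfin : b ^ (j - a) ≤ (δ₀⁻¹ * Q ^ (-(d j))) ^ (j - a) := by
    calc b ^ (j - a) ≤ δ₀⁻¹ * Q ^ (θ j - θ a) := h1
      _ ≤ δ₀⁻¹ * (Q ^ (-(d j))) ^ (j - a) := by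
          refine mul_le_mul_of_nonneg_left ?_ (by positivity)
          rw [← h3]; exact h2
      _ ≤ (δ₀⁻¹) ^ (j - a) * (Q ^ (-(d j))) ^ (j - a) :=
          mul_le_mul_of_nonneg_right h4 (by positivity)
      _ = (δ₀⁻¹ * Q ^ (-(d j))) ^ (j - a) := (mul_pow _ _ _).symm
  exact le_of_pow_le_pow_left₀ (by omega) hRpos.le hfin
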